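/- Let 0 < λ < 1, f(z) = (1−z)^{−(1−λ)/2} (principal branch), a ∈ ℝ \ {0}, and 0 < t < 2π/|a|. Then sup_{0<r<1} (1−r)^{(3−λ)/2} |e^{iat} f′(re^{iat}) − f′(r)| ≥ (1−λ)/2; in particular for the rotation semigroup φ_t(z) = e^{iat}z one has ‖f∘φ_t − f‖_{B^{(3−λ)/2}} ≥ (1−λ)/2. -/

import Mathlib

open Complex Set Filter Metric

noncomputable section

/-- The (extended-real-valued) Bloch-type norm ‖g‖_{B^α}. -/
def blochNormE (α : ℝ) (g : ℂ → ℂ) : ENNReal :=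
  ENNReal.ofReal ‖g 0‖ +
    ⨆ z ∈ ball (0:ℂ) 1, ENNReal.ofReal ((1 - ‖z‖ ^ 2) ^ α * ‖deriv g z‖)

set_option maxHeartbeats 1000000 in
/-- For f(z) = (1−z)^{−(1−λ)/2}, a ∈ ℝ \ {0} and 0 < t < 2π/|a|,
sup_{0<r<1}(1−r)^{(3−λ)/2}|e^{iat}f′(re^{iat}) − f′(r)| ≥ (1−λ)/2; in particular
‖f∘φ_t − f‖_{B^{(3−λ)/2}} ≥ (1−λ)/2 for the rotation semigroup φ_t(z)=e^{iat}z. -/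
theorem rotation_bloch_lower_bound
    (lam : ℝ) (hlam0 : 0 < lam) (hlam1 : lam < 1)
    (f : ℂ → ℂ) (hf : f = fun z => (1 - z) ^ (-((1 : ℂ) - (lam : ℂ)) / 2))
    (a : ℝ) (ha : a ≠ 0) (t : ℝ) (ht0 : 0 < t) (ht1 : t < 2 * Real.pi / |a|) :
    (∀ ε > 0, ∃ r : ℝ, 0 < r ∧ r < 1 ∧
      (1 - lam) / 2 - ε < (1 - r) ^ ((3 - lam) / 2) *
        ‖Complex.exp ((a * t : ℝ) * Complex.I) *
            deriv f ((r : ℂ) * Complex.exp ((a * t : ℝ) * Complex.I)) - deriv f (r : ℂ)‖) ∧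
    ENNReal.ofReal ((1 - lam) / 2) ≤
      blochNormE ((3 - lam) / 2)
        (fun z => f (Complex.exp ((a * t : ℝ) * Complex.I) * z) - f z) := by
  have hπ := Real.pi_pos
  set w : ℂ := -((1 : ℂ) - (lam : ℂ)) / 2 with hw
  subst hf
  set c : ℂ := Complex.exp ((a * t : ℝ) * Complex.I) with hc
  set μ : ℝ := (1 - lam) / 2 with hμdef
  set α : ℝ := (3 - lam) / 2 with hαdef
  have hμ : 0 < μ := by rw [hμdef]; linarith
  have hα : 0 < α := by rw [hαdef]; linarith
  have habsc : ‖c‖ = 1 := by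
    rw [hc, Complex.norm_exp]; simp
  have hc1 : c ≠ 1 := by
    intro h
    rw [hc, Complex.exp_eq_one_iff] at h
    obtain ⟨n, hn⟩ := h
    have him : a * t = (n : ℝ) * (2 * Real.pi) := by
      have := congrArg Complex.im hn
      simpa using this
    have hat : |a| * t < 2 * Real.pi := by
      have h' := (lt_div_iff₀ (abs_pos.mpr ha)).1 ht1
      linarith [mul_comm t |a|]
    have hat2 : |a * t| < 2 * Real.pi := by
      rw [abs_mul, abs_of_pos ht0]; exact hat
    rcases eq_or_ne n 0 with hn0 | hn0
    · rw [hn0] at him; simp at him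
      rcases him with h | h
      · exact ha h
      · linarith
    · have h1 : (1 : ℝ) ≤ |(n : ℝ)| := by
        rw [← Int.cast_abs]
        exact_mod_cast Int.one_le_abs hn0
      have : |a * t| = |(n : ℝ)| * (2 * Real.pi) := by
        rw [him, abs_mul, abs_of_pos (by linarith : (0:ℝ) < 2 * Real.pi)]
      nlinarith
  have h1c : (1 : ℂ) - c ≠ 0 := sub_ne_zero.mpr (Ne.symm hc1)
  set δ : ℝ := ‖1 - c‖ / 2 with hδdef
  have hδ : 0 < δ := by
    rw [hδdef]; exact half_pos (norm_pos_iff.mpr h1c)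
  -- slit plane memberships
  have hslit₁ : ∀ r : ℝ, 0 < r → r < 1 → (1 - (r : ℂ)) ∈ slitPlane := by
    intro r h0 h1
    rw [Complex.mem_slitPlane_iff]
    left; simp; linarith
  have hslit₂ : ∀ r : ℝ, 0 < r → r < 1 → (1 - (r : ℂ) * c) ∈ slitPlane := by
    intro r h0 h1
    rw [Complex.mem_slitPlane_iff]
    left
    have hre : ((r : ℂ) * c).re = r * c.re := by simp
    have hcre : c.re ≤ 1 := by
      calc c.re ≤ ‖c‖ := Complex.re_le_norm c
        _ = 1 := habsc
    have : r * c.re ≤ r := by nlinarith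
    simp only [Complex.sub_re, Complex.one_re, hre]
    linarith
  -- derivative of (1-z)^w
  have hder : ∀ z : ℂ, (1 - z) ∈ slitPlane →
      HasDerivAt (fun z : ℂ => (1 - z) ^ w) (w * (1 - z) ^ (w - 1) * (-1)) z := by
    intro z hz
    exact ((hasDerivAt_id z).const_sub 1).cpow_const hz
  have hw1 : w - 1 = ((-α : ℝ) : ℂ) := by
    rw [hw, hαdef]; push_cast; ring
  have hwabs : ‖w‖ = μ := by
    have hweq : w = (((lam - 1) / 2 : ℝ) : ℂ) := by rw [hw]; push_cast; ring
    rw [hweq, Complex.norm_real, Real.norm_eq_abs, abs_of_neg (by linarith), hμdef]; ring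
  have hnorm : ∀ z : ℂ, ‖w * (1 - z) ^ (w - 1) * (-1)‖ = μ * ‖1 - z‖ ^ (-α) := by
    intro z
    rw [norm_mul, norm_mul, norm_neg, norm_one, mul_one,
      hwabs, hw1, Complex.norm_cpow_real]
  -- value of (1-r)^α * ‖deriv at r‖
  have hval : ∀ r : ℝ, 0 < r → r < 1 →
      (1 - r) ^ α * ‖w * (1 - (r : ℂ)) ^ (w - 1) * (-1)‖ = μ := by
    intro r h0 h1
    rw [hnorm]
    have habs : ‖1 - (r : ℂ)‖ = 1 - r := by
      rw [show (1 - (r : ℂ)) = ((1 - r : ℝ) : ℂ) by push_cast; ring, Complex.norm_real, Real.norm_eq_abs,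
        abs_of_pos (by linarith)]
    rw [habs, mul_comm μ _, ← mul_assoc, ← Real.rpow_add (by linarith : (0:ℝ) < 1 - r),
      add_neg_cancel, Real.rpow_zero, one_mul]
  -- bound on the rotated term
  have hbound : ∀ r : ℝ, 0 < r → r < 1 → 1 - r ≤ δ →
      ‖c * (w * (1 - (r : ℂ) * c) ^ (w - 1) * (-1))‖ ≤ μ * δ ^ (-α) := by
    intro r h0 h1 hrδ
    rw [norm_mul, habsc, one_mul, hnorm]
    have hge : δ ≤ ‖1 - (r : ℂ) * c‖ := by
      have h₁ : ‖1 - c‖ ≤ ‖1 - (r : ℂ) * c‖ + ‖(r : ℂ) * c - c‖ := by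
        have := norm_add_le (1 - (r : ℂ) * c) ((r : ℂ) * c - c)
        simpa using this
      have h₂ : ‖(r : ℂ) * c - c‖ = 1 - r := by
        rw [show ((r : ℂ) * c - c) = ((r - 1 : ℝ) : ℂ) * c by push_cast; ring, norm_mul, habsc,
          mul_one, Complex.norm_real, Real.norm_eq_abs, abs_of_neg (by linarith), neg_sub]
      rw [hδdef] at *
      linarith
    have : ‖1 - (r : ℂ) * c‖ ^ (-α) ≤ δ ^ (-α) :=
      Real.rpow_le_rpow_of_nonpos hδ hge (by linarith)
    exact mul_le_mul_of_nonneg_left this hμ.le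
  -- the key approximation
  have key : ∀ ε : ℝ, 0 < ε → ∃ r : ℝ, 0 < r ∧ r < 1 ∧
      μ - ε < (1 - r) ^ α *
        ‖c * (w * (1 - (r : ℂ) * c) ^ (w - 1) * (-1)) - w * (1 - (r : ℂ)) ^ (w - 1) * (-1)‖ := by
    intro ε hε
    set M : ℝ := μ * δ ^ (-α) with hM
    have hM0 : 0 < M := by
      rw [hM]; exact mul_pos hμ (Real.rpow_pos_of_pos hδ _)
    set s₀ : ℝ := (ε / (2 * M)) ^ α⁻¹ with hs₀
    have hs₀0 : 0 < s₀ := Real.rpow_pos_of_pos (by positivity) _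
    set s : ℝ := min δ (min 1 s₀) / 2 with hs
    have hm0 : 0 < min δ (min 1 s₀) := lt_min hδ (lt_min one_pos hs₀0)
    have hs0 : 0 < s := by rw [hs]; linarith
    have hs1 : s < 1 := by
      have h' : min δ (min 1 s₀) ≤ 1 := le_trans (min_le_right _ _) (min_le_left _ _)
      rw [hs]; linarith
    have hsδ : s ≤ δ := by
      have h' := min_le_left δ (min 1 s₀)
      rw [hs]; linarith
    have hss₀ : s < s₀ := by
      have h' : min δ (min 1 s₀) ≤ s₀ := le_trans (min_le_right _ _) (min_le_right _ _)
      rw [hs]; linarith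
    obtain ⟨r, hr0, hr1, hrs⟩ : ∃ r : ℝ, 0 < r ∧ r < 1 ∧ 1 - r = s :=
      ⟨1 - s, by linarith, by linarith, by ring⟩
    refine ⟨r, hr0, hr1, ?_⟩
    have hpow : (1 - r) ^ α * M < ε := by
      have h₁ : s ^ α < s₀ ^ α := Real.rpow_lt_rpow hs0.le hss₀ hα
      have h₂ : s₀ ^ α = ε / (2 * M) := by
        rw [hs₀, ← Real.rpow_mul (by positivity), inv_mul_cancel₀ hα.ne', Real.rpow_one]
      have h₃ : s ^ α * M < ε / (2 * M) * M := mul_lt_mul_of_pos_right (h₂ ▸ h₁) hM0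
      have h₄ : ε / (2 * M) * M = ε / 2 := by field_simp
      rw [hrs]
      linarith
    set A := c * (w * (1 - (r : ℂ) * c) ^ (w - 1) * (-1)) with hA
    set B := w * (1 - (r : ℂ)) ^ (w - 1) * (-1) with hB
    have e1 : (1 - r) ^ α * ‖B‖ = μ := hval r hr0 hr1
    have e2 : ‖A‖ ≤ M := hbound r hr0 hr1 (by linarith)
    have htri : ‖B‖ - ‖A‖ ≤ ‖A - B‖ := by
      have h := norm_sub_norm_le B A
      rwa [norm_sub_rev] at h
    have hpnn : (0:ℝ) ≤ (1 - r) ^ α := Real.rpow_nonneg (by linarith) _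
    have p1 := mul_le_mul_of_nonneg_left htri hpnn
    have p2 := mul_le_mul_of_nonneg_left e2 hpnn
    nlinarith [p1, p2, e1, hpow, mul_sub ((1 - r) ^ α) ‖B‖ ‖A‖]
  -- derivatives as `deriv`
  have hderiv_r : ∀ r : ℝ, 0 < r → r < 1 →
      deriv (fun z : ℂ => (1 - z) ^ w) (r : ℂ) = w * (1 - (r : ℂ)) ^ (w - 1) * (-1) := by
    intro r h0 h1
    exact (hder _ (hslit₁ r h0 h1)).deriv
  have hderiv_rc : ∀ r : ℝ, 0 < r → r < 1 →
      deriv (fun z : ℂ => (1 - z) ^ w) ((r : ℂ) * c) =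
        w * (1 - (r : ℂ) * c) ^ (w - 1) * (-1) := by
    intro r h0 h1
    exact (hder _ (hslit₂ r h0 h1)).deriv
  have part1 : ∀ ε > 0, ∃ r : ℝ, 0 < r ∧ r < 1 ∧
      μ - ε < (1 - r) ^ α *
        ‖c * deriv (fun z : ℂ => (1 - z) ^ w) ((r : ℂ) * c) -
          deriv (fun z : ℂ => (1 - z) ^ w) (r : ℂ)‖ := by
    intro ε hε
    obtain ⟨r, hr0, hr1, hlt⟩ := key ε hε
    exact ⟨r, hr0, hr1, by rw [hderiv_r r hr0 hr1, hderiv_rc r hr0 hr1]; exact hlt⟩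
  refine ⟨part1, ?_⟩
  -- derivative of the difference function
  have hgder : ∀ r : ℝ, 0 < r → r < 1 →
      deriv (fun z : ℂ => (1 - c * z) ^ w - (1 - z) ^ w) (r : ℂ) =
        c * (w * (1 - (r : ℂ) * c) ^ (w - 1) * (-1)) - w * (1 - (r : ℂ)) ^ (w - 1) * (-1) := by
    intro r h0 h1
    have hinner : HasDerivAt (fun z : ℂ => c * z) c (r : ℂ) := by
      simpa using (hasDerivAt_id (r : ℂ)).const_mul c
    have houter : HasDerivAt (fun z : ℂ => (1 - z) ^ w)
        (w * (1 - c * (r : ℂ)) ^ (w - 1) * (-1)) (c * (r : ℂ)) := by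
      have hmem : (1 - c * (r : ℂ)) ∈ slitPlane := by
        rw [mul_comm]; exact hslit₂ r h0 h1
      exact hder _ hmem
    have hcomp : HasDerivAt (fun z : ℂ => (1 - c * z) ^ w)
        ((w * (1 - c * (r : ℂ)) ^ (w - 1) * (-1)) * c) (r : ℂ) := houter.comp _ hinner
    have hsub := hcomp.sub (hder (r : ℂ) (hslit₁ r h0 h1))
    rw [show (fun z : ℂ => (1 - c * z) ^ w - (1 - z) ^ w) = ((fun z : ℂ => (1 - c * z) ^ w) - fun z => (1 - z) ^ w) from rfl, hsub.deriv, mul_comm c (r : ℂ)]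
    ring
  apply ENNReal.le_of_forall_pos_le_add
  intro ε hε _
  have hε' : (0 : ℝ) < (ε : ℝ) := by exact_mod_cast hε
  obtain ⟨r, hr0, hr1, hlt⟩ := key (ε : ℝ) hε'
  set g : ℂ → ℂ := fun z : ℂ => (1 - c * z) ^ w - (1 - z) ^ w with hg
  have hgB : blochNormE α (fun z => (1 - c * z) ^ w - (1 - z) ^ w) =
      blochNormE α g := rfl
  have habsr : ‖(r : ℂ)‖ = r := by
    rw [Complex.norm_real, Real.norm_eq_abs, abs_of_pos hr0]
  have hX : μ ≤ (1 - ‖(r : ℂ)‖ ^ 2) ^ α * ‖deriv g (r : ℂ)‖ + (ε : ℝ) := by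
    have hD : deriv g (r : ℂ) =
        c * (w * (1 - (r : ℂ) * c) ^ (w - 1) * (-1)) - w * (1 - (r : ℂ)) ^ (w - 1) * (-1) :=
      hgder r hr0 hr1
    have hmono : (1 - r) ^ α ≤ (1 - ‖(r : ℂ)‖ ^ 2) ^ α := by
      rw [habsr]
      exact Real.rpow_le_rpow (by linarith) (by nlinarith) hα.le
    have := mul_le_mul_of_nonneg_right hmono (norm_nonneg (deriv g (r : ℂ)))
    rw [hD] at this ⊢
    linarith [hlt, this]
  calc ENNReal.ofReal μ
      ≤ ENNReal.ofReal ((1 - ‖(r : ℂ)‖ ^ 2) ^ α * ‖deriv g (r : ℂ)‖ + (ε : ℝ)) :=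
        ENNReal.ofReal_le_ofReal hX
    _ = ENNReal.ofReal ((1 - ‖(r : ℂ)‖ ^ 2) ^ α * ‖deriv g (r : ℂ)‖) + (ε : ENNReal) := by
        have hXnn : (0:ℝ) ≤ (1 - ‖(r : ℂ)‖ ^ 2) ^ α * ‖deriv g (r : ℂ)‖ :=
          mul_nonneg (Real.rpow_nonneg
            (show (0:ℝ) ≤ 1 - ‖(r : ℂ)‖ ^ 2 by rw [habsr]; nlinarith) α)
            (norm_nonneg _)
        rw [ENNReal.ofReal_add hXnn hε'.le, ENNReal.ofReal_coe_nnreal]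
    _ ≤ (⨆ z ∈ ball (0:ℂ) 1, ENNReal.ofReal ((1 - ‖z‖ ^ 2) ^ α * ‖deriv g z‖)) +
          (ε : ENNReal) := by
        gcongr
        have hmem : ((r : ℝ) : ℂ) ∈ ball (0 : ℂ) 1 := by
          rw [mem_ball, dist_zero_right, habsr]; exact hr1
        exact le_biSup (fun z : ℂ => ENNReal.ofReal ((1 - ‖z‖ ^ 2) ^ α * ‖deriv g z‖))
          hmem
    _ ≤ blochNormE α g + (ε : ENNReal) := by
        rw [blochNormE]
        gcongr
        exact le_add_self
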